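/- arXiv:2311.04324 — 3 statements merged into one kernel-verified Lean document; each statement's English description precedes it below -/
import Mathlib

section
/- Let q be an odd positive integer and let χ be a Dirichlet character mod q with conductor f_χ. Then (1/φ(q))·∑_{v mod q, gcd(v,q)=1} χ(v + 1) equals 0 if f_χ is not squarefree, and equals (−1)^{ω(f_χ)}·α(q)/∏_{ℓ ∣ f_χ} (ℓ − 2) if f_χ is squarefree, where the product runs over the primes ℓ dividing f_χ. -/
/-- `α(q) = ∏_{ℓ ∣ q} (1 - 1/(ℓ-1))`, the product over distinct primes dividing `q`. -/
noncomputable def alpha (q : ℕ) : ℝ := ∏ ℓ ∈ q.primeFactors, (1 - 1 / ((ℓ : ℝ) - 1))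

/-- `ρ_χ = (1/φ(q)) ∑_{v mod q, gcd(v,q)=1} χ(v + 1)`. -/
noncomputable def rho (q : ℕ) (χ : DirichletCharacter ℂ q) : ℂ :=
  (q.totient : ℂ)⁻¹ *
    ∑ v ∈ Finset.range q, if Nat.gcd v q = 1 then χ ((v : ZMod q) + 1) else 0

set_option linter.unusedSectionVars false

open Finset DirichletCharacter


section cond
variable {q : ℕ} [NeZero q] (χ : DirichletCharacter ℂ q)

lemma factorsThrough_gcd {a b : ℕ} (ha : FactorsThrough χ a) (hb : FactorsThrough χ b) :
    FactorsThrough χ (Nat.gcd a b) := by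
  have haq : a ∣ q := ha.dvd
  have hbq : b ∣ q := hb.dvd
  have hgq : Nat.gcd a b ∣ q := (Nat.gcd_dvd_left a b).trans haq
  have hq0 : q ≠ 0 := NeZero.ne q
  rw [factorsThrough_iff_ker_unitsMap hgq]
  rw [factorsThrough_iff_ker_unitsMap haq] at ha
  rw [factorsThrough_iff_ker_unitsMap hbq] at hb
  intro u hu
  rw [MonoidHom.mem_ker] at hu
  set α : ℕ := ((u : ZMod q)).val with hαdef
  have huα : ((α : ZMod q)) = (u : ZMod q) := ZMod.natCast_rightInverse _
  have hαg : α ≡ 1 [MOD Nat.gcd a b] := by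
    have h1 : ((ZMod.unitsMap hgq u : ZMod (Nat.gcd a b))) = 1 := by rw [hu]; rfl
    rw [ZMod.unitsMap_def, Units.coe_map, ← huα] at h1
    simp only [MonoidHom.coe_coe, map_natCast] at h1
    rw [← Nat.cast_one, ZMod.natCast_eq_natCast_iff] at h1
    exact h1
  obtain ⟨k, hk₁, hk₂⟩ := Nat.chineseRemainder' hαg
  have hcopα : Nat.Coprime α q := by
    have : IsUnit ((α : ZMod q)) := by rw [huα]; exact u.isUnit
    exact (ZMod.isUnit_iff_coprime α q).mp this
  have hka : Nat.Coprime k a := by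
    have h := Nat.ModEq.gcd_eq hk₁
    exact h.trans (hcopα.coprime_dvd_right haq)
  have hkb : Nat.Coprime k b := by
    have h := Nat.ModEq.gcd_eq hk₂
    simpa [Nat.Coprime] using h
  have hLq : Nat.lcm a b ∣ q := Nat.lcm_dvd haq hbq
  haveI : NeZero (Nat.lcm a b) := ⟨fun h => hq0 (Nat.eq_zero_of_zero_dvd (h ▸ hLq))⟩
  have hkL : Nat.Coprime k (Nat.lcm a b) :=
    Nat.Coprime.coprime_dvd_right (Nat.lcm_dvd_mul a b) (hka.mul_right hkb)
  have hunit : IsUnit ((k : ZMod (Nat.lcm a b))) := (ZMod.isUnit_iff_coprime k _).mpr hkL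
  obtain ⟨v, hv⟩ := ZMod.unitsMap_surjective hLq hunit.unit
  have hva : ZMod.unitsMap haq v = ZMod.unitsMap haq u := by
    have hcomp : ZMod.unitsMap haq v
        = ZMod.unitsMap (Nat.dvd_lcm_left a b) (ZMod.unitsMap hLq v) := by
      rw [← MonoidHom.comp_apply, ZMod.unitsMap_comp]
    rw [hcomp, hv]
    ext
    rw [ZMod.unitsMap_def, ZMod.unitsMap_def]
    simp only [Units.coe_map, MonoidHom.coe_coe, IsUnit.unit_spec, map_natCast]
    rw [← huα, map_natCast, ZMod.natCast_eq_natCast_iff]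
    exact hk₁
  have hvb : ZMod.unitsMap hbq v = 1 := by
    have hcomp : ZMod.unitsMap hbq v
        = ZMod.unitsMap (Nat.dvd_lcm_right a b) (ZMod.unitsMap hLq v) := by
      rw [← MonoidHom.comp_apply, ZMod.unitsMap_comp]
    rw [hcomp, hv]
    ext
    rw [ZMod.unitsMap_def]
    simp only [Units.coe_map, MonoidHom.coe_coe, IsUnit.unit_spec, map_natCast, Units.val_one]
    rw [← Nat.cast_one, ZMod.natCast_eq_natCast_iff]
    exact hk₂
  have h1 : χ.toUnitHom v = 1 := hb (by rw [MonoidHom.mem_ker, hvb])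
  have h2 : χ.toUnitHom (u * v⁻¹) = 1 := by
    apply ha
    rw [MonoidHom.mem_ker, map_mul, map_inv, hva, mul_inv_cancel]
  rw [MonoidHom.mem_ker, show u = u * v⁻¹ * v by group, map_mul, h1, h2, one_mul]

lemma conductor_dvd_of_factorsThrough {d : ℕ} (h : FactorsThrough χ d) : χ.conductor ∣ d := by
  have hg : FactorsThrough χ (Nat.gcd χ.conductor d) :=
    factorsThrough_gcd χ (factorsThrough_conductor χ) h
  have hle : χ.conductor ≤ Nat.gcd χ.conductor d := Nat.sInf_le hg
  have hdvd : Nat.gcd χ.conductor d ∣ χ.conductor := Nat.gcd_dvd_left _ _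
  have hpos : 0 < χ.conductor := Nat.pos_of_ne_zero (conductor_ne_zero χ)
  have : Nat.gcd χ.conductor d = χ.conductor :=
    Nat.le_antisymm (Nat.le_of_dvd hpos hdvd) hle
  rw [← this]; exact Nat.gcd_dvd_right _ _

lemma factorsThrough_of_conductor_dvd {d : ℕ} (hdq : d ∣ q) (h : χ.conductor ∣ d) :
    FactorsThrough χ d := by
  refine ⟨hdq, changeLevel h χ.primitiveCharacter, ?_⟩
  rw [← changeLevel_trans _ h hdq]
  exact (factorsThrough_conductor χ).eq_changeLevel.trans (by congr 1)

end cond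
section grp
variable {q : ℕ} [NeZero q] (χ : DirichletCharacter ℂ q)

/-- Sum of a Dirichlet character over the kernel of `unitsMap`. -/
lemma sum_ker_eq {d : ℕ} (hd : d ∣ q) :
    ∑ u : (ZMod q)ˣ, (if ZMod.unitsMap hd u = 1 then χ u else 0)
      = if χ.conductor ∣ d then (Nat.card (ZMod.unitsMap hd).ker : ℂ) else 0 := by
  by_cases h : χ.conductor ∣ d
  · have hker : (ZMod.unitsMap hd).ker ≤ χ.toUnitHom.ker :=
      (factorsThrough_iff_ker_unitsMap hd).mp (factorsThrough_of_conductor_dvd χ hd h)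
    rw [if_pos h]
    have : ∀ u : (ZMod q)ˣ, (if ZMod.unitsMap hd u = 1 then (χ u : ℂ) else 0)
        = (if ZMod.unitsMap hd u = 1 then 1 else 0) := by
      intro u
      by_cases hu : ZMod.unitsMap hd u = 1
      · rw [if_pos hu, if_pos hu]
        have : χ.toUnitHom u = 1 := hker (MonoidHom.mem_ker.mpr hu)
        have := congrArg (Units.val) this
        rwa [MulChar.coe_toUnitHom] at this
      · rw [if_neg hu, if_neg hu]
    rw [Finset.sum_congr rfl fun u _ => this u, Finset.sum_boole]
    congr 1
    rw [Nat.card_eq_fintype_card, Fintype.card_subtype]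
    congr 1
    ext u
    simp [MonoidHom.mem_ker]
  · rw [if_neg h]
    -- χ is nontrivial on the kernel
    have hker : ¬ (ZMod.unitsMap hd).ker ≤ χ.toUnitHom.ker := by
      intro hle
      exact h (conductor_dvd_of_factorsThrough χ
        ((factorsThrough_iff_ker_unitsMap hd).mpr hle))
    obtain ⟨u₀, hu₀ker, hu₀⟩ : ∃ u₀, ZMod.unitsMap hd u₀ = 1 ∧ χ.toUnitHom u₀ ≠ 1 := by
      by_contra hc
      push_neg at hc
      exact hker fun u hu => MonoidHom.mem_ker.mpr (hc u (MonoidHom.mem_ker.mp hu))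
    set S := ∑ u : (ZMod q)ˣ, (if ZMod.unitsMap hd u = 1 then (χ u : ℂ) else 0) with hS
    have hmul : (χ u₀ : ℂ) * S = S := by
      rw [hS, Finset.mul_sum]
      apply Finset.sum_nbij' (i := fun u => u₀ * u) (j := fun u => u₀⁻¹ * u)
      · intro a _; exact Finset.mem_univ _
      · intro a _; exact Finset.mem_univ _
      · intro a _; group
      · intro a _; group
      · intro a _
        by_cases ha : ZMod.unitsMap hd a = 1
        · rw [if_pos ha, if_pos (by rw [map_mul, hu₀ker, ha, one_mul])]
          rw [← map_mul]
          rfl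
        · rw [if_neg ha, if_neg (by rw [map_mul, hu₀ker, one_mul]; exact ha), mul_zero]
    have hne : (χ u₀ : ℂ) ≠ 1 := by
      intro hc
      apply hu₀
      ext
      rw [MulChar.coe_toUnitHom, hc, Units.val_one]
    have := sub_eq_zero.mpr hmul
    rw [← sub_one_mul] at this
    rcases mul_eq_zero.mp this with h' | h'
    · exact absurd (sub_eq_zero.mp h') hne
    · exact h'

end grp


section card
variable {q : ℕ} [NeZero q]

lemma card_ker_mul {d : ℕ} (hd : d ∣ q) :
    Nat.card (ZMod.unitsMap hd).ker * d.totient = q.totient := by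
  haveI : NeZero d := ⟨fun h => NeZero.ne q (Nat.eq_zero_of_zero_dvd (h ▸ hd))⟩
  have h1 : Nat.card (ZMod q)ˣ = Nat.card ((ZMod q)ˣ ⧸ (ZMod.unitsMap hd).ker)
      * Nat.card (ZMod.unitsMap hd).ker :=
    Subgroup.card_eq_card_quotient_mul_card_subgroup _
  have h2 : Nat.card ((ZMod q)ˣ ⧸ (ZMod.unitsMap hd).ker) = Nat.card (ZMod d)ˣ := by
    rw [Nat.card_congr (QuotientGroup.quotientKerEquivRange (ZMod.unitsMap hd)).toEquiv]
    rw [MonoidHom.range_eq_top.mpr (ZMod.unitsMap_surjective hd)]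
    exact Nat.card_congr Subgroup.topEquiv.toEquiv
  have h3 : Nat.card (ZMod q)ˣ = q.totient := by
    rw [Nat.card_eq_fintype_card, ZMod.card_units_eq_totient]
  have h4 : Nat.card (ZMod d)ˣ = d.totient := by
    rw [Nat.card_eq_fintype_card, ZMod.card_units_eq_totient]
  rw [← h3, h1, h2, h4, mul_comm]

end card
section main
variable {q : ℕ} [NeZero q] (χ : DirichletCharacter ℂ q)

open ArithmeticFunction in
lemma rho_eq : rho q χ
    = ∑ d ∈ q.divisors,
        if χ.conductor ∣ d then ((moebius d : ℤ) : ℂ) / (d.totient : ℂ) else 0 := by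
  have hq0 : q ≠ 0 := NeZero.ne q
  -- Step A : sum over `range q` equals sum over `ZMod q`
  have hA : (∑ v ∈ Finset.range q, if Nat.gcd v q = 1 then χ ((v : ZMod q) + 1) else 0)
      = ∑ x : ZMod q, (if IsUnit x then χ (x + 1) else 0) := by
    refine Finset.sum_bij' (fun v _ => ((v : ZMod q))) (fun x _ => x.val) ?_ ?_ ?_ ?_ ?_
    · intro a _; exact Finset.mem_univ _
    · intro a _; exact Finset.mem_range.mpr (ZMod.val_lt _)
    · intro a ha; exact ZMod.val_cast_of_lt (Finset.mem_range.mp ha)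
    · intro a _; exact ZMod.natCast_rightInverse a
    · intro v _
      by_cases h : Nat.gcd v q = 1
      · rw [if_pos h, if_pos ((ZMod.isUnit_iff_coprime v q).mpr h)]
      · rw [if_neg h, if_neg (fun hc => h ((ZMod.isUnit_iff_coprime v q).mp hc))]
  -- Möbius expansion of the unit indicator
  have hmz : ∀ n : ℕ, (∑ d ∈ n.divisors, (moebius d : ℤ)) = if n = 1 then 1 else 0 := by
    intro n
    have h : (moebius * ↑zeta : ArithmeticFunction ℤ) n = (1 : ArithmeticFunction ℤ) n := by
      rw [moebius_mul_coe_zeta]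
    rw [← coe_mul_zeta_apply, h, one_apply]
  have hind : ∀ x : ZMod q, (if IsUnit x then (χ (x + 1) : ℂ) else 0)
      = ∑ d ∈ q.divisors, ((if d ∣ x.val then ((moebius d : ℤ) : ℂ) else 0) * χ (x + 1)) := by
    intro x
    rw [← Finset.sum_mul]
    have hfilt : {d ∈ q.divisors | d ∣ x.val} = (Nat.gcd x.val q).divisors := by
      ext d
      simp only [Finset.mem_filter, Nat.mem_divisors, Nat.dvd_gcd_iff]
      constructor
      · rintro ⟨⟨h1, _⟩, h3⟩; exact ⟨⟨h3, h1⟩, Nat.gcd_ne_zero_right hq0⟩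
      · rintro ⟨⟨h1, h2⟩, _⟩; exact ⟨⟨h2, hq0⟩, h1⟩
    have hsum : (∑ d ∈ q.divisors, (if d ∣ x.val then ((moebius d : ℤ) : ℂ) else 0))
        = if IsUnit x then 1 else 0 := by
      rw [← Finset.sum_filter, hfilt]
      have h2 : (∑ d ∈ (Nat.gcd x.val q).divisors, ((moebius d : ℤ) : ℂ))
          = if Nat.gcd x.val q = 1 then 1 else 0 := by
        rw [← Int.cast_sum, hmz]
        split <;> simp
      rw [h2]
      have hx : IsUnit x ↔ Nat.gcd x.val q = 1 := by
        conv_lhs => rw [show x = ((x.val : ℕ) : ZMod q) from (ZMod.natCast_rightInverse x).symm]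
        exact ZMod.isUnit_iff_coprime _ _
      exact if_congr hx.symm rfl rfl
    rw [hsum]
    by_cases h : IsUnit x <;> simp [h]
  -- swap sums
  have hB : (∑ x : ZMod q, (if IsUnit x then χ (x + 1) else 0))
      = ∑ d ∈ q.divisors, (((moebius d : ℤ) : ℂ)
          * ∑ x : ZMod q, (if d ∣ x.val then χ (x + 1) else 0)) := by
    rw [Finset.sum_congr rfl (fun x _ => hind x), Finset.sum_comm]
    refine Finset.sum_congr rfl fun d _ => ?_
    rw [Finset.mul_sum]
    refine Finset.sum_congr rfl fun x _ => ?_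
    by_cases h : d ∣ x.val <;> simp [h]
  -- local evaluation
  have hC : ∀ d : ℕ, d ∣ q → (∑ x : ZMod q, (if d ∣ x.val then (χ (x + 1) : ℂ) else 0))
      = if χ.conductor ∣ d then ((q.totient : ℂ) / (d.totient : ℂ)) else 0 := by
    intro d hd
    haveI : NeZero d := ⟨fun h => hq0 (Nat.eq_zero_of_zero_dvd (h ▸ hd))⟩
    have hshift : (∑ x : ZMod q, (if d ∣ x.val then (χ (x + 1) : ℂ) else 0))
        = ∑ y : ZMod q, (if d ∣ ((y - 1 : ZMod q)).val then (χ y : ℂ) else 0) := by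
      refine Fintype.sum_equiv (Equiv.addRight (1 : ZMod q)) _ _ fun y => ?_
      simp only [Equiv.coe_addRight, add_sub_cancel_right]
    have hrestrict : (∑ y : ZMod q, (if d ∣ ((y - 1 : ZMod q)).val then (χ y : ℂ) else 0))
        = ∑ u : (ZMod q)ˣ, (if d ∣ (((u : ZMod q) - 1)).val then (χ u : ℂ) else 0) := by
      have hvanish : ∀ y ∈ (Finset.univ : Finset (ZMod q)),
          (if d ∣ ((y - 1 : ZMod q)).val then (χ y : ℂ) else 0) ≠ 0 → IsUnit y := by
        intro y _ hy
        by_contra hu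
        apply hy
        rw [χ.map_nonunit hu]
        simp
      rw [← Finset.sum_filter_of_ne hvanish]
      symm
      refine Finset.sum_bij' (fun u _ => ((u : ZMod q)))
        (fun y hy => (Finset.mem_filter.mp hy).2.unit) ?_ ?_ ?_ ?_ ?_
      · intro a _
        exact Finset.mem_filter.mpr ⟨Finset.mem_univ _, a.isUnit⟩
      · intro a _; exact Finset.mem_univ _
      · intro a ha
        exact Units.ext (IsUnit.unit_spec _)
      · intro y hy
        exact IsUnit.unit_spec _
      · intro u _
        rfl
    have hcond : ∀ u : (ZMod q)ˣ, (d ∣ (((u : ZMod q) - 1)).val ↔ ZMod.unitsMap hd u = 1) := by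
      intro u
      rw [← ZMod.natCast_eq_zero_iff _ d]
      have hval : ((((u : ZMod q) - 1)).val : ZMod d)
          = ZMod.castHom hd (ZMod d) ((u : ZMod q) - 1) := by
        conv_rhs => rw [show ((u : ZMod q) - 1) = ((((u : ZMod q) - 1)).val : ZMod q)
          from (ZMod.natCast_rightInverse _).symm]
        rw [map_natCast]
      rw [hval, map_sub, map_one, sub_eq_zero, Units.ext_iff]
      have : (ZMod.unitsMap hd u : ZMod d) = ZMod.castHom hd (ZMod d) (u : ZMod q) := rfl
      rw [this, Units.val_one]
    have hker : (∑ u : (ZMod q)ˣ, (if d ∣ (((u : ZMod q) - 1)).val then (χ u : ℂ) else 0))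
        = ∑ u : (ZMod q)ˣ, (if ZMod.unitsMap hd u = 1 then (χ u : ℂ) else 0) :=
      Finset.sum_congr rfl fun u _ => if_congr (hcond u) rfl rfl
    rw [hshift, hrestrict, hker, sum_ker_eq χ hd]
    have hcardeq : (Nat.card (ZMod.unitsMap hd).ker : ℂ) = (q.totient : ℂ) / (d.totient : ℂ) := by
      have h1 := card_ker_mul (q := q) hd
      have h2 : (d.totient : ℂ) ≠ 0 := by
        exact_mod_cast (Nat.totient_pos.mpr (Nat.pos_of_ne_zero (NeZero.ne d))).ne'
      rw [eq_div_iff h2]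
      exact_mod_cast congrArg (Nat.cast : ℕ → ℂ) h1
    rw [hcardeq]
  -- assemble
  rw [rho, hA, hB, Finset.mul_sum]
  refine Finset.sum_congr rfl fun d hd => ?_
  rw [hC d (Nat.dvd_of_mem_divisors hd)]
  have hφq : (q.totient : ℂ) ≠ 0 := by
    exact_mod_cast (Nat.totient_pos.mpr (Nat.pos_of_ne_zero hq0)).ne'
  by_cases h : χ.conductor ∣ d
  · rw [if_pos h, if_pos h]
    field_simp
  · rw [if_neg h, if_neg h, mul_zero, mul_zero]

end main




lemma prime_prod_totient {t : Finset ℕ} (h : ∀ p ∈ t, p.Prime) :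
    (∏ p ∈ t, p).totient = ∏ p ∈ t, (p - 1) := by
  induction t using Finset.induction_on with
  | empty => simp
  | @insert a s ha ih =>
    have hpa : a.Prime := h a (Finset.mem_insert_self a s)
    have hcop : Nat.Coprime a (∏ p ∈ s, p) := by
      rw [hpa.coprime_iff_not_dvd]
      intro hdvd
      obtain ⟨b, hb, hab⟩ := hpa.prime.exists_mem_finset_dvd hdvd
      exact ha (((Nat.prime_dvd_prime_iff_eq hpa (h b (Finset.mem_insert_of_mem hb))).mp hab) ▸ hb)
    rw [Finset.prod_insert ha, Finset.prod_insert ha, Nat.totient_mul hcop,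
      ih (fun p hp => h p (Finset.mem_insert_of_mem hp)), Nat.totient_prime hpa]

lemma squarefree_prod_primes {t : Finset ℕ} (h : ∀ p ∈ t, p.Prime) :
    Squarefree (∏ p ∈ t, p) := by
  induction t using Finset.induction_on with
  | empty => simpa using squarefree_one
  | @insert a s ha ih =>
    have hpa : a.Prime := h a (Finset.mem_insert_self a s)
    have hcop : Nat.Coprime a (∏ p ∈ s, p) := by
      rw [hpa.coprime_iff_not_dvd]
      intro hdvd
      obtain ⟨b, hb, hab⟩ := hpa.prime.exists_mem_finset_dvd hdvd
      exact ha (((Nat.prime_dvd_prime_iff_eq hpa (h b (Finset.mem_insert_of_mem hb))).mp hab) ▸ hb)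
    rw [Finset.prod_insert ha]
    exact (Nat.squarefree_mul hcop).mpr
      ⟨hpa.squarefree, ih (fun p hp => h p (Finset.mem_insert_of_mem hp))⟩

open ArithmeticFunction in
lemma moebius_prod_primes {t : Finset ℕ} (h : ∀ p ∈ t, p.Prime) :
    moebius (∏ p ∈ t, p) = (-1) ^ t.card := by
  rw [isMultiplicative_moebius.map_prod_of_prime t h,
    Finset.prod_congr rfl (fun p hp => moebius_apply_prime (h p hp)), Finset.prod_const]

open ArithmeticFunction in
lemma final_eval {q : ℕ} (hq0 : q ≠ 0) (hodd : Odd q) {f : ℕ} (hfq : f ∣ q)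
    (hsf : Squarefree f) :
    (∑ d ∈ q.divisors, if f ∣ d then ((moebius d : ℤ) : ℂ) / (d.totient : ℂ) else 0)
      = (-1 : ℂ) ^ (f.primeFactors.card) * (alpha q : ℂ) /
          ∏ ℓ ∈ f.primeFactors, ((ℓ : ℂ) - 2) := by
  set Q := q.primeFactors with hQ
  set F := f.primeFactors with hF
  have hFQ : F ⊆ Q := Nat.primeFactors_mono hfq hq0
  set g : ℕ → ℂ := fun p => -1 / ((p : ℂ) - 1) with hg
  have hQprime : ∀ p ∈ Q, p.Prime := fun p hp => Nat.prime_of_mem_primeFactors hp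
  have hQne1 : ∀ p ∈ Q, ((p : ℂ) - 1) ≠ 0 := by
    intro p hp
    have := (hQprime p hp).one_lt
    intro hc
    rw [sub_eq_zero] at hc
    exact this.ne' (by exact_mod_cast hc)
  have hQne2 : ∀ p ∈ Q, ((p : ℂ) - 2) ≠ 0 := by
    intro p hp
    intro hc
    rw [sub_eq_zero] at hc
    have hp2 : p = 2 := by exact_mod_cast hc
    have h2q : 2 ∣ q := hp2 ▸ Nat.dvd_of_mem_primeFactors hp
    exact (Nat.not_even_iff_odd.mpr hodd) ((even_iff_two_dvd).mpr h2q)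
  -- Step 1 : only squarefree divisors contribute
  have h1 : (∑ d ∈ q.divisors, if f ∣ d then ((moebius d : ℤ) : ℂ) / (d.totient : ℂ) else 0)
      = ∑ d ∈ {d ∈ q.divisors | f ∣ d ∧ Squarefree d},
          ((moebius d : ℤ) : ℂ) / (d.totient : ℂ) := by
    rw [← Finset.sum_filter]
    symm
    apply Finset.sum_subset
    · intro d hd
      simp only [Finset.mem_filter] at hd ⊢
      exact ⟨hd.1, hd.2.1⟩
    · intro d hd hnd
      simp only [Finset.mem_filter] at hd hnd
      have hnsf : ¬ Squarefree d := fun hc => hnd ⟨hd.1, hd.2, hc⟩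
      simp [moebius_eq_zero_of_not_squarefree hnsf]
  -- Step 2 : reindex by sets of primes
  have h2 : (∑ d ∈ {d ∈ q.divisors | f ∣ d ∧ Squarefree d},
        ((moebius d : ℤ) : ℂ) / (d.totient : ℂ))
      = ∑ t ∈ {t ∈ Q.powerset | F ⊆ t}, ∏ p ∈ t, g p := by
    refine Finset.sum_bij' (fun d _ => d.primeFactors) (fun t _ => ∏ p ∈ t, p) ?_ ?_ ?_ ?_ ?_
    · intro d hd
      simp only [Finset.mem_filter, Nat.mem_divisors] at hd
      have hd0 : d ≠ 0 := fun hc => hq0 (Nat.eq_zero_of_zero_dvd (hc ▸ hd.1.1))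
      exact Finset.mem_filter.mpr ⟨Finset.mem_powerset.mpr (Nat.primeFactors_mono hd.1.1 hq0),
        Nat.primeFactors_mono hd.2.1 hd0⟩
    · intro t ht
      simp only [Finset.mem_filter, Finset.mem_powerset] at ht
      have hprime : ∀ p ∈ t, p.Prime := fun p hp => hQprime p (ht.1 hp)
      refine Finset.mem_filter.mpr ⟨Nat.mem_divisors.mpr ⟨?_, hq0⟩, ?_, squarefree_prod_primes hprime⟩
      · exact dvd_trans (Finset.prod_dvd_prod_of_subset _ _ _ ht.1) (Nat.prod_primeFactors_dvd q)
      · calc f = ∏ p ∈ F, p := (Nat.prod_primeFactors_of_squarefree hsf).symm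
          _ ∣ ∏ p ∈ t, p := Finset.prod_dvd_prod_of_subset _ _ _ ht.2
    · intro d hd
      simp only [Finset.mem_filter] at hd
      exact Nat.prod_primeFactors_of_squarefree hd.2.2
    · intro t ht
      simp only [Finset.mem_filter, Finset.mem_powerset] at ht
      exact Nat.primeFactors_prod (fun p hp => hQprime p (ht.1 hp))
    · intro d hd
      simp only [Finset.mem_filter, Nat.mem_divisors] at hd
      have hprime : ∀ p ∈ d.primeFactors, p.Prime := fun p hp => Nat.prime_of_mem_primeFactors hp
      have hμ : moebius d = (-1) ^ (d.primeFactors.card) := by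
        conv_lhs => rw [← Nat.prod_primeFactors_of_squarefree hd.2.2]
        rw [moebius_prod_primes hprime]
      have hφ : (d.totient : ℂ) = ∏ p ∈ d.primeFactors, ((p : ℂ) - 1) := by
        conv_lhs => rw [← Nat.prod_primeFactors_of_squarefree hd.2.2]
        rw [prime_prod_totient hprime, Nat.cast_prod]
        exact Finset.prod_congr rfl fun p hp => by
          rw [Nat.cast_sub (hprime p hp).one_le, Nat.cast_one]
      have hgprod : (∏ p ∈ d.primeFactors, g p)
          = ((-1 : ℂ)) ^ (d.primeFactors.card) / ∏ p ∈ d.primeFactors, ((p : ℂ) - 1) := by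
        rw [hg]
        rw [Finset.prod_div_distrib, Finset.prod_const]
      rw [hgprod, hμ, hφ]
      push_cast
      ring
  -- Step 3 : split off the primes of F
  have h3 : (∑ t ∈ {t ∈ Q.powerset | F ⊆ t}, ∏ p ∈ t, g p)
      = (∏ p ∈ F, g p) * ∑ s ∈ (Q \ F).powerset, ∏ p ∈ s, g p := by
    rw [Finset.mul_sum]
    refine Finset.sum_bij' (fun t _ => t \ F) (fun s _ => s ∪ F) ?_ ?_ ?_ ?_ ?_
    · intro t ht
      simp only [Finset.mem_filter, Finset.mem_powerset] at ht
      exact Finset.mem_powerset.mpr (Finset.sdiff_subset_sdiff ht.1 le_rfl)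
    · intro s hs
      simp only [Finset.mem_powerset] at hs
      exact Finset.mem_filter.mpr ⟨Finset.mem_powerset.mpr
        (Finset.union_subset (hs.trans Finset.sdiff_subset) hFQ), Finset.subset_union_right⟩
    · intro t ht
      simp only [Finset.mem_filter, Finset.mem_powerset] at ht
      exact Finset.sdiff_union_of_subset ht.2
    · intro s hs
      simp only [Finset.mem_powerset] at hs
      have hdisj : Disjoint s F := Finset.disjoint_of_subset_left hs Finset.sdiff_disjoint
      show (s ∪ F) \ F = s
      rw [Finset.union_sdiff_distrib, Finset.sdiff_self, Finset.union_empty,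
        Finset.sdiff_eq_self_of_disjoint hdisj]
    · intro t ht
      simp only [Finset.mem_filter, Finset.mem_powerset] at ht
      conv_lhs => rw [← Finset.sdiff_union_of_subset ht.2]
      rw [Finset.prod_union Finset.sdiff_disjoint, mul_comm]
  -- Step 4 : expand the product
  have h4 : (∑ s ∈ (Q \ F).powerset, ∏ p ∈ s, g p) = ∏ p ∈ Q \ F, (g p + 1) := by
    rw [Finset.prod_add]
    exact (Finset.sum_congr rfl fun s _ => by rw [Finset.prod_const_one, mul_one]).symm
  -- Step 5 : final algebra
  have halpha : (alpha q : ℂ) = ∏ p ∈ Q, (g p + 1) := by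
    rw [alpha]
    push_cast
    exact Finset.prod_congr rfl fun p hp => by rw [hg]; ring
  rw [h1, h2, h3, h4, halpha, ← Finset.prod_sdiff hFQ]
  have hF2 : (∏ p ∈ F, ((p : ℂ) - 2)) ≠ 0 :=
    Finset.prod_ne_zero_iff.mpr fun p hp => hQne2 p (hFQ hp)
  rw [eq_div_iff hF2]
  have hptwise : ∀ p ∈ F, g p * ((p : ℂ) - 2) = (-1) * (g p + 1) := by
    intro p hp
    have h1' := hQne1 p (hFQ hp)
    rw [hg]
    field_simp
    ring
  have hFkey : (∏ p ∈ F, g p) * (∏ p ∈ F, ((p : ℂ) - 2))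
      = (-1 : ℂ) ^ F.card * ∏ p ∈ F, (g p + 1) := by
    rw [← Finset.prod_mul_distrib, Finset.prod_congr rfl hptwise, Finset.prod_mul_distrib,
      Finset.prod_const]
  linear_combination (∏ p ∈ Q \ F, (g p + 1)) * hFkey

theorem stmt8 (q : ℕ) (hq : Odd q) (χ : DirichletCharacter ℂ q) :
    (¬ Squarefree χ.conductor → rho q χ = 0) ∧
    (Squarefree χ.conductor →
      rho q χ = (-1 : ℂ) ^ (χ.conductor.primeFactors.card) * (alpha q : ℂ) /
        ∏ ℓ ∈ χ.conductor.primeFactors, ((ℓ : ℂ) - 2)) := by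
  have hq0 : q ≠ 0 := by
    rintro rfl
    simp [Nat.odd_iff] at hq
  haveI : NeZero q := ⟨hq0⟩
  constructor
  · intro hnsf
    rw [rho_eq χ]
    refine Finset.sum_eq_zero fun d hd => ?_
    by_cases h : χ.conductor ∣ d
    · rw [if_pos h]
      have hnd : ¬ Squarefree d := fun hsd => hnsf (hsd.squarefree_of_dvd h)
      simp [ArithmeticFunction.moebius_eq_zero_of_not_squarefree hnd]
    · rw [if_neg h]
  · intro hsf
    rw [rho_eq χ]
    exact final_eval hq0 hq (conductor_dvd_level χ) hsf
end

section
/- There exists a constant C such that for every prime ℓ ≥ 5, if w denotes the residue class mod ℓ² satisfying 16·w ≡ 9 (mod ℓ²), then #{(v₁, v₂) : v₁, v₂ units mod ℓ², (v₁² + v₁ + 1)·(v₂² + v₂ + 1) ≡ w (mod ℓ²)} ≥ 2ℓ²·(1 − C/√ℓ). -/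
open Finset
namespace St13


lemma quad_card {F : Type*} [Field F] [Fintype F] [DecidableEq F] (a b c : F)
    (h : ¬(a = 0 ∧ b = 0 ∧ c = 0)) :
    (univ.filter fun τ : F => a*τ^2 + b*τ + c = 0).card ≤ 2 := by
  classical
  set p : Polynomial F := Polynomial.C a * Polynomial.X ^ 2 + Polynomial.C b * Polynomial.X
      + Polynomial.C c with hp
  have hpne : p ≠ 0 := by
    intro h0
    apply h
    have h2 := congrArg (fun q => Polynomial.coeff q 2) h0
    have h1 := congrArg (fun q => Polynomial.coeff q 1) h0
    have hc := congrArg (fun q => Polynomial.coeff q 0) h0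
    simp [hp, Polynomial.coeff_add, Polynomial.coeff_C_mul, Polynomial.coeff_X_pow,
      Polynomial.coeff_C, Polynomial.coeff_X] at h2 h1 hc
    exact ⟨h2, h1, hc⟩
  have hsub : (univ.filter fun τ : F => a*τ^2 + b*τ + c = 0) ⊆ p.roots.toFinset := by
    intro τ hτ
    simp only [mem_filter, mem_univ, true_and] at hτ
    rw [Multiset.mem_toFinset, Polynomial.mem_roots']
    refine ⟨hpne, ?_⟩
    simp [hp, Polynomial.IsRoot, hτ]
  calc (univ.filter fun τ : F => a*τ^2 + b*τ + c = 0).card ≤ p.roots.toFinset.card :=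
        Finset.card_le_card hsub
    _ ≤ Multiset.card p.roots := Multiset.toFinset_card_le _
    _ ≤ p.natDegree := Polynomial.card_roots' p
    _ ≤ 2 := Polynomial.natDegree_quadratic_le



section
variable {ℓ : ℕ} [hℓ : Fact ℓ.Prime]

instance : NeZero (ℓ ^ 2) := ⟨pow_ne_zero 2 hℓ.out.ne_zero⟩

/-- reduction mod ℓ -/
noncomputable def pr : ZMod (ℓ^2) →+* ZMod ℓ := ZMod.castHom (dvd_pow_self ℓ two_ne_zero) (ZMod ℓ)

lemma pr_natCast (m : ℕ) : pr (ℓ := ℓ) (m : ZMod (ℓ^2)) = (m : ZMod ℓ) := map_natCast _ m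

lemma pr_eq_zero_iff (z : ZMod (ℓ^2)) : pr z = 0 ↔ ℓ ∣ z.val := by
  conv_lhs => rw [← ZMod.natCast_rightInverse z]
  rw [pr_natCast, ZMod.natCast_eq_zero_iff]

lemma isUnit_iff_pr (z : ZMod (ℓ^2)) : IsUnit z ↔ pr z ≠ 0 := by
  rw [ne_eq, pr_eq_zero_iff]
  conv_lhs => rw [← ZMod.natCast_rightInverse z]
  rw [ZMod.isUnit_iff_coprime, Nat.coprime_pow_right_iff two_pos,
    Nat.coprime_comm, Nat.Prime.coprime_iff_not_dvd hℓ.out]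

lemma pr_lift (c : ZMod ℓ) : pr (ℓ := ℓ) ((c.val : ℕ) : ZMod (ℓ^2)) = c := by
  rw [pr_natCast, ZMod.natCast_rightInverse c]

lemma exists_mul_of_pr_zero (z : ZMod (ℓ^2)) (h : pr z = 0) : ∃ m : ZMod (ℓ^2), z = (ℓ : ZMod (ℓ^2)) * m := by
  rw [pr_eq_zero_iff] at h
  obtain ⟨k, hk⟩ := h
  refine ⟨(k : ZMod (ℓ^2)), ?_⟩
  have hz : z = ((z.val : ℕ) : ZMod (ℓ^2)) := (ZMod.natCast_rightInverse z).symm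
  rw [hz, hk]
  push_cast
  ring

lemma ellsq_zero : ((ℓ : ZMod (ℓ^2)))^2 = 0 := by
  rw [← Nat.cast_pow, ZMod.natCast_self]

lemma sq_eq_zero_of_pr_zero (z : ZMod (ℓ^2)) (h : pr z = 0) : z^2 = 0 := by
  obtain ⟨m, rfl⟩ := exists_mul_of_pr_zero z h
  rw [mul_pow, ellsq_zero, zero_mul]


lemma pr_card : Fintype.card (ZMod ℓ) = ℓ := ZMod.card ℓ

lemma fiber_card (c : ZMod ℓ) :
    (univ.filter fun z : ZMod (ℓ^2) => pr z = c).card = ℓ := by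
  classical
  have huc : ((univ : Finset (ZMod ℓ))).card = ℓ := by simp [ZMod.card]
  have key : ((univ : Finset (ZMod ℓ))).card = (univ.filter fun z : ZMod (ℓ^2) => pr z = c).card := ?_
  · rw [← key, huc]
  refine (Finset.card_nbij (fun t : ZMod ℓ => ((c.val : ℕ) : ZMod (ℓ^2)) + (ℓ : ZMod (ℓ^2)) * ((t.val : ℕ) : ZMod (ℓ^2))) ?_ ?_ ?_)
  · intro t _
    simp only [Finset.mem_coe, mem_filter, mem_univ, true_and, map_add, map_mul]
    rw [pr_lift, pr_natCast, pr_natCast]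
    simp [ZMod.natCast_self]
  · intro t₁ h₁ t₂ h₂ h
    simp only [add_right_injective, add_right_inj] at h
    have h' : (((ℓ * t₁.val : ℕ)) : ZMod (ℓ^2)) = ((ℓ * t₂.val : ℕ) : ZMod (ℓ^2)) := by
      push_cast; exact h
    have hv := congrArg ZMod.val h'
    rw [ZMod.val_cast_of_lt, ZMod.val_cast_of_lt] at hv
    · have := Nat.eq_of_mul_eq_mul_left hℓ.out.pos hv
      exact ZMod.val_injective _ this
    · rw [pow_two]; exact Nat.mul_lt_mul_of_pos_left (ZMod.val_lt t₂) hℓ.out.pos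
    · rw [pow_two]; exact Nat.mul_lt_mul_of_pos_left (ZMod.val_lt t₁) hℓ.out.pos
  · intro z hz
    simp only [coe_filter, mem_univ, true_and, Set.mem_setOf_eq] at hz
    have h0 : pr (z - ((c.val : ℕ) : ZMod (ℓ^2))) = 0 := by
      rw [map_sub, pr_lift, hz, sub_self]
    rw [pr_eq_zero_iff] at h0
    obtain ⟨k, hk⟩ := h0
    have hklt : k < ℓ := by
      by_contra hkge
      push_neg at hkge
      have : ℓ^2 ≤ ℓ * k := by rw [pow_two]; exact Nat.mul_le_mul_left ℓ hkge
      exact absurd (hk ▸ ZMod.val_lt _) (by omega)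
    refine ⟨(k : ZMod ℓ), by simp, ?_⟩
    simp only
    rw [ZMod.val_cast_of_lt hklt]
    have : ((ℓ * k : ℕ) : ZMod (ℓ^2)) = z - ((c.val : ℕ) : ZMod (ℓ^2)) := by
      rw [← hk, ZMod.natCast_rightInverse]
    push_cast at this
    rw [this]
    ring

lemma comp_card (Q : ZMod ℓ → Prop) [DecidablePred Q] :
    (univ.filter fun z : ZMod (ℓ^2) => Q (pr z)).card = ℓ * (univ.filter Q).card := by
  classical
  have hdecomp : (univ.filter fun z : ZMod (ℓ^2) => Q (pr z)) =
      (univ.filter Q).biUnion (fun c => univ.filter fun z : ZMod (ℓ^2) => pr z = c) := by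
    ext z
    simp only [mem_filter, mem_univ, true_and, mem_biUnion]
    constructor
    · intro h; exact ⟨pr z, h, rfl⟩
    · rintro ⟨c, hc, rfl⟩; exact hc
  rw [hdecomp, Finset.card_biUnion]
  · rw [Finset.sum_congr rfl (fun c _ => fiber_card c), Finset.sum_const, smul_eq_mul, mul_comm]
  · intro x _ y _ hxy
    simp only [Finset.disjoint_left, mem_filter, mem_univ, true_and]
    rintro z rfl h
    exact hxy h

lemma natCast_ne_zero_mod (m : ℕ) (h0 : 0 < m) (hm : m < ℓ) : (m : ZMod ℓ) ≠ 0 := by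
  rw [ne_eq, ZMod.natCast_eq_zero_iff]
  intro hdvd
  exact absurd (Nat.le_of_dvd h0 hdvd) (by omega)

lemma pr_inv (z : ZMod (ℓ^2)) (hz : IsUnit z) : pr (z⁻¹) = (pr z)⁻¹ := by
  have h2 : pr z * pr (z⁻¹) = 1 := by
    rw [← map_mul, ZMod.mul_inv_of_unit z hz, map_one]
  exact eq_inv_of_mul_eq_one_right h2

lemma hensel_sqrt (s b : ZMod (ℓ^2)) (hodd : (2 : ZMod ℓ) ≠ 0) (hb : pr b ≠ 0)
    (hs : pr s = (pr b)^2) :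
    ∃ r : ZMod (ℓ^2), r^2 = s ∧ pr r = pr b := by
  have h2b : IsUnit (2*b : ZMod (ℓ^2)) := by
    rw [isUnit_iff_pr, map_mul]
    rw [map_ofNat]
    exact mul_ne_zero hodd hb
  obtain ⟨m, hm⟩ := exists_mul_of_pr_zero (s - b^2)
    (by rw [map_sub, hs, map_pow, sub_self])
  have hinv : (2*b) * (2*b)⁻¹ = 1 := ZMod.mul_inv_of_unit _ h2b
  refine ⟨b + (ℓ : ZMod (ℓ^2)) * ((2*b)⁻¹ * m), ?_, ?_⟩
  · have hz := ellsq_zero (ℓ := ℓ)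
    linear_combination -hm + ((ℓ : ZMod (ℓ^2)) * m) * hinv + ((2*b)⁻¹*m)^2 * hz
  · rw [map_add, map_mul, pr_natCast]
    simp [ZMod.natCast_self]

lemma inv_injective_units (a b : ZMod (ℓ^2)) (ha : IsUnit a) (hb : IsUnit b)
    (h : a⁻¹ = b⁻¹) : a = b := by
  have h1 := ZMod.mul_inv_of_unit a ha
  have h2 := ZMod.inv_mul_of_unit b hb
  calc a = a * (b⁻¹ * b) := by rw [h2, mul_one]
    _ = (a * a⁻¹) * b := by rw [← h]; ring
    _ = b := by rw [h1, one_mul]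

end
end St13
namespace St13

section Defs
variable {K : Type*} [CommRing K] [Inv K]

/-- slope parametrization of the conic -/
def sP (a b τ : K) : K := (τ^2+1)⁻¹ * (-2*(a*τ+b))
def AP (a b τ : K) : K := a + τ * sP a b τ
def BP (a b τ : K) : K := b + sP a b τ
def QP (a b τ : K) : Prop := τ^2+1 ≠ 0 ∧ a*τ+b ≠ 0 ∧
  AP a b τ ≠ 0 ∧ AP a b τ ≠ 1 ∧ BP a b τ ≠ 0 ∧ BP a b τ ≠ 1

end Defs

lemma QP_card {F : Type*} [Field F] [Fintype F] [DecidableEq F] (a b : F)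
    [DecidablePred (QP a b)] (hb : b ≠ 0) (h2 : (2:F) ≠ 0) :
    Fintype.card F ≤ (univ.filter (fun τ => QP a b τ)).card + 12 := by
  classical
  have hsplit := Finset.card_filter_add_card_filter_not
    (p := fun τ : F => QP a b τ) (s := univ)
  have hsub : (univ.filter fun τ : F => ¬ QP a b τ) ⊆
      ((((univ.filter fun τ : F => (1:F)*τ^2 + 0*τ + 1 = 0) ∪
      (univ.filter fun τ : F => (0:F)*τ^2 + a*τ + b = 0)) ∪
      ((univ.filter fun τ : F => (-a)*τ^2 + (-(2*b))*τ + a = 0) ∪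
      (univ.filter fun τ : F => (-(a+1))*τ^2 + (-(2*b))*τ + (a-1) = 0))) ∪
      ((univ.filter fun τ : F => b*τ^2 + (-(2*a))*τ + (-b) = 0) ∪
      (univ.filter fun τ : F => (b-1)*τ^2 + (-(2*a))*τ + (-(b+1)) = 0))) := by
    intro τ hτ
    simp only [mem_filter, mem_univ, true_and, mem_union] at hτ ⊢
    by_cases h1 : τ^2 + 1 = 0
    · exact Or.inl (Or.inl (Or.inl (by linear_combination h1)))
    by_cases hl : a*τ+b = 0
    · exact Or.inl (Or.inl (Or.inr (by linear_combination hl)))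
    have hδ : (τ^2+1) * (τ^2+1)⁻¹ = 1 := mul_inv_cancel₀ h1
    unfold QP at hτ
    push_neg at hτ
    by_cases hA0 : AP a b τ = 0
    · refine Or.inl (Or.inr (Or.inl ?_))
      unfold AP sP at hA0
      linear_combination (τ^2+1)*hA0 - (τ*(-2*(a*τ+b)))*hδ
    by_cases hA1 : AP a b τ = 1
    · refine Or.inl (Or.inr (Or.inr ?_))
      unfold AP sP at hA1
      linear_combination (τ^2+1)*hA1 - (τ*(-2*(a*τ+b)))*hδ
    by_cases hB0 : BP a b τ = 0
    · refine Or.inr (Or.inl ?_)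
      unfold BP sP at hB0
      linear_combination (τ^2+1)*hB0 - (-2*(a*τ+b))*hδ
    have hB1 : BP a b τ = 1 := hτ h1 hl hA0 hA1 hB0
    refine Or.inr (Or.inr ?_)
    unfold BP sP at hB1
    linear_combination (τ^2+1)*hB1 - (-2*(a*τ+b))*hδ
  have hbound : (univ.filter fun τ : F => ¬ QP a b τ).card ≤ 12 := by
    refine (Finset.card_le_card hsub).trans ?_
    refine (Finset.card_union_le _ _).trans ?_
    have c1 := quad_card (1:F) 0 1 (by rintro ⟨h,-,-⟩; exact one_ne_zero h)
    have c2 := quad_card (0:F) a b (by rintro ⟨-,-,h⟩; exact hb h)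
    have c3 := quad_card (-a) (-(2*b)) a
      (by rintro ⟨-,h,-⟩; exact hb ((mul_eq_zero.mp (neg_eq_zero.mp h)).resolve_left h2))
    have c4 := quad_card (-(a+1)) (-(2*b)) (a-1)
      (by rintro ⟨-,h,-⟩; exact hb ((mul_eq_zero.mp (neg_eq_zero.mp h)).resolve_left h2))
    have c5 := quad_card b (-(2*a)) (-b) (by rintro ⟨h,-,-⟩; exact hb h)
    have c6 := quad_card (b-1) (-(2*a)) (-(b+1))
      (by rintro ⟨h1,-,h3⟩; exact h2 (by linear_combination -h3 - h1))
    have u1 := (Finset.card_union_le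
      ((univ.filter fun τ : F => (1:F)*τ^2 + 0*τ + 1 = 0) ∪
       (univ.filter fun τ : F => (0:F)*τ^2 + a*τ + b = 0))
      ((univ.filter fun τ : F => (-a)*τ^2 + (-(2*b))*τ + a = 0) ∪
       (univ.filter fun τ : F => (-(a+1))*τ^2 + (-(2*b))*τ + (a-1) = 0)))
    have u2 := (Finset.card_union_le
      (univ.filter fun τ : F => (1:F)*τ^2 + 0*τ + 1 = 0)
      (univ.filter fun τ : F => (0:F)*τ^2 + a*τ + b = 0))
    have u3 := (Finset.card_union_le
      (univ.filter fun τ : F => (-a)*τ^2 + (-(2*b))*τ + a = 0)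
      (univ.filter fun τ : F => (-(a+1))*τ^2 + (-(2*b))*τ + (a-1) = 0))
    have u4 := (Finset.card_union_le
      (univ.filter fun τ : F => b*τ^2 + (-(2*a))*τ + (-b) = 0)
      (univ.filter fun τ : F => (b-1)*τ^2 + (-(2*a))*τ + (-(b+1)) = 0))
    omega
  have huniv : (univ : Finset F).card = Fintype.card F := Finset.card_univ
  omega

lemma conic_point {K : Type*} [CommRing K] [Inv K] (a b t w : K) (hpoint : a^2+b^2 = w)
    (hδ : (t^2+1)*(t^2+1)⁻¹ = 1) : (AP a b t)^2 + (BP a b t)^2 = w := by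
  unfold AP BP sP
  linear_combination hpoint + ((t^2+1)⁻¹*(-2*(a*t+b))^2)*hδ

section Main
variable {ℓ : ℕ} [hℓ : Fact ℓ.Prime]

lemma pr_compat (a b t : ZMod (ℓ^2)) (hδ : IsUnit (t^2+1 : ZMod (ℓ^2))) :
    pr (sP a b t) = sP (pr a) (pr b) (pr t) ∧ pr (AP a b t) = AP (pr a) (pr b) (pr t) ∧
      pr (BP a b t) = BP (pr a) (pr b) (pr t) := by
  have hs : pr (sP a b t) = sP (pr a) (pr b) (pr t) := by
    unfold sP
    rw [map_mul, pr_inv _ hδ]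
    simp [map_add, map_pow, map_neg, map_mul, map_one, map_ofNat]
  refine ⟨hs, ?_, ?_⟩
  · unfold AP; rw [map_add, map_mul, hs]
  · unfold BP; rw [map_add, hs]

lemma zmod_count (h5 : 5 ≤ ℓ) (P : Finset (ZMod (ℓ^2) × ZMod (ℓ^2)))
    (hP : ∀ z : ZMod (ℓ^2) × ZMod (ℓ^2), z ∈ P ↔ (IsUnit z.1 ∧ IsUnit z.2 ∧
      16 * ((z.1^2 + z.1 + 1) * (z.2^2 + z.2 + 1)) = 9)) :
    2 * ℓ ^ 2 ≤ P.card + 12 * ℓ := by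
  classical
  have h2F : (2 : ZMod ℓ) ≠ 0 := by
    have := natCast_ne_zero_mod (ℓ := ℓ) 2 (by norm_num) (by omega); exact_mod_cast this
  have h3F : (3 : ZMod ℓ) ≠ 0 := by
    have := natCast_ne_zero_mod (ℓ := ℓ) 3 (by norm_num) (by omega); exact_mod_cast this
  have hF2inv : (2 : ZMod ℓ) * 2⁻¹ = 1 := mul_inv_cancel₀ h2F
  have h2Finv : (2 : ZMod ℓ)⁻¹ ≠ 0 := inv_ne_zero h2F
  have pr2 : pr (2 : ZMod (ℓ^2)) = 2 := map_ofNat _ 2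
  have pr3 : pr (3 : ZMod (ℓ^2)) = 3 := map_ofNat _ 3
  have hu2 : IsUnit (2 : ZMod (ℓ^2)) := by rw [isUnit_iff_pr, pr2]; exact h2F
  have hu3 : IsUnit (3 : ZMod (ℓ^2)) := by rw [isUnit_iff_pr, pr3]; exact h3F
  have h2inv : (2 : ZMod (ℓ^2)) * 2⁻¹ = 1 := ZMod.mul_inv_of_unit _ hu2
  have h3inv : (3 : ZMod (ℓ^2)) * 3⁻¹ = 1 := ZMod.mul_inv_of_unit _ hu3
  have hu2inv : IsUnit ((2 : ZMod (ℓ^2))⁻¹) :=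
    IsUnit.of_mul_eq_one _ (ZMod.inv_mul_of_unit _ hu2)
  have pr2inv : pr ((2 : ZMod (ℓ^2))⁻¹) = (2 : ZMod ℓ)⁻¹ := by rw [pr_inv _ hu2, pr2]
  -- base point on the conic mod ℓ
  have hc0 : (-(3⁻¹ : ZMod ℓ)) ≠ 0 := neg_ne_zero.mpr (inv_ne_zero h3F)
  obtain ⟨a₀, b₀, hb₀, hab⟩ : ∃ a b : ZMod ℓ, b ≠ 0 ∧ a^2 + b^2 = -(3⁻¹ : ZMod ℓ) := by
    obtain ⟨a, b, hab⟩ := ZMod.sq_add_sq ℓ (-(3⁻¹ : ZMod ℓ))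
    by_cases hb : b = 0
    · refine ⟨b, a, fun ha0 => hc0 ?_, by linear_combination hab⟩
      rw [← hab, ha0, hb]; ring
    · exact ⟨a, b, hb, hab⟩
  -- Hensel lift of the base point
  set ah : ZMod (ℓ^2) := ((a₀.val : ℕ) : ZMod (ℓ^2)) with hahdef
  have hprah : pr ah = a₀ := pr_lift a₀
  have hprC : pr (-(3⁻¹ : ZMod (ℓ^2))) = -(3⁻¹ : ZMod ℓ) := by
    rw [map_neg, pr_inv _ hu3, pr3]
  obtain ⟨bh, hbhsq, hprbh⟩ := hensel_sqrt (-(3⁻¹ : ZMod (ℓ^2)) - ah^2)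
    ((b₀.val : ℕ) : ZMod (ℓ^2)) h2F (by rw [pr_lift]; exact hb₀)
    (by rw [map_sub, map_pow, hprah, hprC, pr_lift]; linear_combination -hab)
  rw [pr_lift] at hprbh
  have hpoint : ah^2 + bh^2 = -(3⁻¹ : ZMod (ℓ^2)) := by linear_combination hbhsq
  -- the two families
  set G : Finset (ZMod (ℓ^2)) := univ.filter (fun t => QP a₀ b₀ (pr t)) with hGdef
  set ψ : ZMod (ℓ^2) → ZMod (ℓ^2) × ZMod (ℓ^2) :=
    fun t => (2⁻¹ * ((AP ah bh t)⁻¹ - 1), 2⁻¹ * ((BP ah bh t)⁻¹ - 1)) with hψdef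
  have hGfact : ∀ t ∈ G, IsUnit (t^2+1 : ZMod (ℓ^2)) ∧
      pr (AP ah bh t) = AP a₀ b₀ (pr t) ∧ pr (BP ah bh t) = BP a₀ b₀ (pr t) ∧
      IsUnit (AP ah bh t) ∧ IsUnit (BP ah bh t) ∧ IsUnit (sP ah bh t) := by
    intro t ht
    rw [hGdef, mem_filter] at ht
    obtain ⟨-, hQ⟩ := ht
    have hδ : IsUnit (t^2+1 : ZMod (ℓ^2)) := by
      rw [isUnit_iff_pr]
      have : pr (t^2+1) = (pr t)^2 + 1 := by simp [map_add, map_pow, map_one]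
      rw [this]; exact hQ.1
    obtain ⟨hs, hA, hB⟩ := pr_compat ah bh t hδ
    rw [hprah, hprbh] at hs hA hB
    have hAu : IsUnit (AP ah bh t) := by rw [isUnit_iff_pr, hA]; exact hQ.2.2.1
    have hBu : IsUnit (BP ah bh t) := by rw [isUnit_iff_pr, hB]; exact hQ.2.2.2.2.1
    have hsu : IsUnit (sP ah bh t) := by
      rw [isUnit_iff_pr, hs]
      unfold sP
      refine mul_ne_zero (inv_ne_zero hQ.1) ?_
      rw [neg_mul]
      exact neg_ne_zero.mpr (mul_ne_zero h2F hQ.2.1)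
    exact ⟨hδ, hA, hB, hAu, hBu, hsu⟩
  have hGQ : ∀ t ∈ G, QP a₀ b₀ (pr t) := by
    intro t ht; rw [hGdef, mem_filter] at ht; exact ht.2
  -- pr of the coordinates of ψ
  have hprψ1 : ∀ t ∈ G, pr (ψ t).1 = (2 : ZMod ℓ)⁻¹ * ((AP a₀ b₀ (pr t))⁻¹ - 1) := by
    intro t ht
    obtain ⟨hδ, hA, hB, hAu, hBu, hsu⟩ := hGfact t ht
    simp only [hψdef]
    rw [map_mul, map_sub, pr_inv _ hAu, hA, pr2inv, map_one]
  -- ψ maps G into P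
  have hmaps : ∀ t ∈ G, ψ t ∈ P := by
    intro t ht
    obtain ⟨hδ, hA, hB, hAu, hBu, hsu⟩ := hGfact t ht
    have hQ := hGQ t ht
    have hδinv : (t^2+1 : ZMod (ℓ^2)) * (t^2+1)⁻¹ = 1 := ZMod.mul_inv_of_unit _ hδ
    have hconic := conic_point ah bh t _ hpoint hδinv
    have hAinv : AP ah bh t * (AP ah bh t)⁻¹ = 1 := ZMod.mul_inv_of_unit _ hAu
    have hBinv : BP ah bh t * (BP ah bh t)⁻¹ = 1 := ZMod.mul_inv_of_unit _ hBu
    have hstepA : (AP ah bh t)^2 * (((AP ah bh t)⁻¹)^2 + 3) = 1 + 3*(AP ah bh t)^2 := by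
      linear_combination (AP ah bh t * (AP ah bh t)⁻¹ + 1) * hAinv
    have hstepB : (BP ah bh t)^2 * (((BP ah bh t)⁻¹)^2 + 3) = 1 + 3*(BP ah bh t)^2 := by
      linear_combination (BP ah bh t * (BP ah bh t)⁻¹ + 1) * hBinv
    have hprodd : ((AP ah bh t)^2*(BP ah bh t)^2) * ((((AP ah bh t)⁻¹)^2+3)*(((BP ah bh t)⁻¹)^2+3))
        = ((AP ah bh t)^2*(BP ah bh t)^2) * 9 := by
      linear_combination ((BP ah bh t)^2*(((BP ah bh t)⁻¹)^2+3))*hstepA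
        + (1+3*(AP ah bh t)^2)*hstepB + 3*hconic - h3inv
    have hABu : IsUnit ((AP ah bh t)^2*(BP ah bh t)^2) := (hAu.pow 2).mul (hBu.pow 2)
    have hcancel : (((AP ah bh t)⁻¹)^2+3)*(((BP ah bh t)⁻¹)^2+3) = 9 :=
      hABu.mul_left_cancel hprodd
    rw [hP]
    refine ⟨?_, ?_, ?_⟩
    · rw [isUnit_iff_pr, hprψ1 t ht]
      refine mul_ne_zero h2Finv (fun hzero => hQ.2.2.2.1 ?_)
      have : (AP a₀ b₀ (pr t))⁻¹ = 1 := by linear_combination hzero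
      exact inv_eq_one.mp this
    · -- second coordinate unit
      simp only [hψdef]
      rw [isUnit_iff_pr, map_mul, map_sub, pr_inv _ hBu, hB, pr2inv, map_one]
      refine mul_ne_zero h2Finv (fun hzero => hQ.2.2.2.2.2 ?_)
      have : (BP a₀ b₀ (pr t))⁻¹ = 1 := by linear_combination hzero
      exact inv_eq_one.mp this
    · simp only [hψdef]
      have h2x : 2 * (2⁻¹ * ((AP ah bh t)⁻¹ - 1)) + 1 = (AP ah bh t)⁻¹ := by
        linear_combination ((AP ah bh t)⁻¹ - 1) * h2inv
      have h2y : 2 * (2⁻¹ * ((BP ah bh t)⁻¹ - 1)) + 1 = (BP ah bh t)⁻¹ := by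
        linear_combination ((BP ah bh t)⁻¹ - 1) * h2inv
      have hring : ∀ x y : ZMod (ℓ^2), 16*((x^2+x+1)*(y^2+y+1))
          = ((2*x+1)^2+3)*((2*y+1)^2+3) := by intro x y; ring
      rw [hring, h2x, h2y]
      exact hcancel
  -- ψ is injective on G
  have hinj : Set.InjOn ψ G := by
    intro t₁ h₁ t₂ h₂ heq
    obtain ⟨hδ1, hA1, hB1, hAu1, hBu1, hsu1⟩ := hGfact t₁ h₁
    obtain ⟨hδ2, hA2, hB2, hAu2, hBu2, hsu2⟩ := hGfact t₂ h₂
    have he1 : (2⁻¹ : ZMod (ℓ^2)) * ((AP ah bh t₁)⁻¹ - 1) = 2⁻¹ * ((AP ah bh t₂)⁻¹ - 1) :=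
      congrArg Prod.fst heq
    have he2 : (2⁻¹ : ZMod (ℓ^2)) * ((BP ah bh t₁)⁻¹ - 1) = 2⁻¹ * ((BP ah bh t₂)⁻¹ - 1) :=
      congrArg Prod.snd heq
    have hAeq : AP ah bh t₁ = AP ah bh t₂ := by
      refine inv_injective_units _ _ hAu1 hAu2 ?_
      have := hu2inv.mul_left_cancel he1
      linear_combination this
    have hBeq : BP ah bh t₁ = BP ah bh t₂ := by
      refine inv_injective_units _ _ hBu1 hBu2 ?_
      have := hu2inv.mul_left_cancel he2
      linear_combination this
    have hseq : sP ah bh t₁ = sP ah bh t₂ := by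
      have := hBeq; unfold BP at this; linear_combination this
    have hts : t₁ * sP ah bh t₁ = t₂ * sP ah bh t₁ := by
      have := hAeq; unfold AP at this
      linear_combination this - t₂ * hseq
    exact hsu1.mul_right_cancel hts
  -- the deep family
  set e : ZMod ℓ := -(2⁻¹ : ZMod ℓ) with hedef
  set S₁ : Finset (ZMod (ℓ^2) × ZMod (ℓ^2)) :=
    univ.filter (fun z => pr z.1 = e ∧ pr z.2 = e) with hS₁def
  have hS₁card : S₁.card = ℓ * ℓ := by
    have hsplit : S₁ = (univ.filter fun z1 : ZMod (ℓ^2) => pr z1 = e) ×ˢ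
        (univ.filter fun z2 : ZMod (ℓ^2) => pr z2 = e) := by
      ext z
      simp [hS₁def, Finset.mem_product, mem_filter]
    rw [hsplit, Finset.card_product, fiber_card]
  have hene : e ≠ 0 := neg_ne_zero.mpr h2Finv
  have hS₁sub : S₁ ⊆ P := by
    intro z hz
    rw [hS₁def, mem_filter] at hz
    obtain ⟨-, hz1, hz2⟩ := hz
    have hzero1 : pr (2*z.1+1) = 0 := by
      rw [map_add, map_mul, pr2, map_one, hz1, hedef]; linear_combination -hF2inv
    have hzero2 : pr (2*z.2+1) = 0 := by
      rw [map_add, map_mul, pr2, map_one, hz2, hedef]; linear_combination -hF2inv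
    have hsq1 : (2*z.1+1)^2 = 0 := sq_eq_zero_of_pr_zero _ hzero1
    have hsq2 : (2*z.2+1)^2 = 0 := sq_eq_zero_of_pr_zero _ hzero2
    rw [hP]
    refine ⟨by rw [isUnit_iff_pr, hz1]; exact hene,
      by rw [isUnit_iff_pr, hz2]; exact hene, ?_⟩
    have : 16*((z.1^2+z.1+1)*(z.2^2+z.2+1)) = ((2*z.1+1)^2+3)*((2*z.2+1)^2+3) := by ring
    rw [this, hsq1, hsq2]; norm_num
  -- disjointness
  have hdisj : Disjoint S₁ (G.image ψ) := by
    rw [Finset.disjoint_right]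
    intro p hp
    obtain ⟨t, ht, rfl⟩ := mem_image.mp hp
    intro hpS
    rw [hS₁def, mem_filter] at hpS
    obtain ⟨-, hp1, -⟩ := hpS
    rw [hprψ1 t ht, hedef] at hp1
    have hAne : AP a₀ b₀ (pr t) ≠ 0 := (hGQ t ht).2.2.1
    have : (AP a₀ b₀ (pr t))⁻¹ = 0 := by
      have h' : (2 : ZMod ℓ)⁻¹ * ((AP a₀ b₀ (pr t))⁻¹ - 1) = 2⁻¹ * (-1) := by
        rw [hp1]; ring
      have := mul_left_cancel₀ h2Finv h'
      linear_combination this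
    exact inv_ne_zero hAne this
  -- assembling the count
  have himgsub : G.image ψ ⊆ P := by
    intro p hp; obtain ⟨t, ht, rfl⟩ := mem_image.mp hp; exact hmaps t ht
  have hunion : S₁ ∪ G.image ψ ⊆ P := Finset.union_subset hS₁sub himgsub
  have hucard : (S₁ ∪ G.image ψ).card = ℓ*ℓ + G.card := by
    rw [Finset.card_union_of_disjoint hdisj, hS₁card, Finset.card_image_of_injOn hinj]
  have hGcard : G.card = ℓ * (univ.filter (fun τ : ZMod ℓ => QP a₀ b₀ τ)).card := by
    rw [hGdef]; exact comp_card (fun τ : ZMod ℓ => QP a₀ b₀ τ)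
  have hq : ℓ ≤ (univ.filter (fun τ : ZMod ℓ => QP a₀ b₀ τ)).card + 12 := by
    have := QP_card a₀ b₀ hb₀ h2F
    rwa [ZMod.card] at this
  have hPcard : ℓ*ℓ + G.card ≤ P.card := hucard ▸ Finset.card_le_card hunion
  set q := (univ.filter (fun τ : ZMod ℓ => QP a₀ b₀ τ)).card with hqdef
  calc 2 * ℓ^2 = ℓ*ℓ + ℓ*ℓ := by ring
    _ ≤ ℓ*ℓ + ℓ*(q+12) := Nat.add_le_add_left (Nat.mul_le_mul_left ℓ hq) _
    _ = (ℓ*ℓ + ℓ*q) + 12*ℓ := by ring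
    _ ≤ P.card + 12*ℓ := by
        have h' : ℓ*ℓ + ℓ*q ≤ P.card := by rw [← hGcard]; exact hPcard
        exact Nat.add_le_add_right h' _

end Main
end St13

namespace St13
section Final
variable {ℓ : ℕ} [hℓ : Fact ℓ.Prime]

lemma nat_count (h5 : 5 ≤ ℓ) :
    2 * ℓ ^ 2 ≤ ((Finset.range (ℓ ^ 2) ×ˢ Finset.range (ℓ ^ 2)).filter
      (fun p : ℕ × ℕ =>
        Nat.Coprime p.1 ℓ ∧ Nat.Coprime p.2 ℓ ∧
        (16 * ((p.1 ^ 2 + p.1 + 1) * (p.2 ^ 2 + p.2 + 1))) % ℓ ^ 2 = 9 % ℓ ^ 2)).card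
      + 12 * ℓ := by
  classical
  set P : Finset (ZMod (ℓ^2) × ZMod (ℓ^2)) := univ.filter (fun z => IsUnit z.1 ∧ IsUnit z.2 ∧
      16 * ((z.1^2 + z.1 + 1) * (z.2^2 + z.2 + 1)) = 9) with hPdef
  have hP : ∀ z : ZMod (ℓ^2) × ZMod (ℓ^2), z ∈ P ↔ (IsUnit z.1 ∧ IsUnit z.2 ∧
      16 * ((z.1^2 + z.1 + 1) * (z.2^2 + z.2 + 1)) = 9) := by
    intro z; rw [hPdef, mem_filter]; simp
  have hcop : ∀ m : ℕ, IsUnit ((m : ZMod (ℓ^2))) ↔ Nat.Coprime m ℓ := by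
    intro m
    rw [ZMod.isUnit_iff_coprime, Nat.coprime_pow_right_iff two_pos]
  have hcard : ((Finset.range (ℓ ^ 2) ×ˢ Finset.range (ℓ ^ 2)).filter
      (fun p : ℕ × ℕ =>
        Nat.Coprime p.1 ℓ ∧ Nat.Coprime p.2 ℓ ∧
        (16 * ((p.1 ^ 2 + p.1 + 1) * (p.2 ^ 2 + p.2 + 1))) % ℓ ^ 2 = 9 % ℓ ^ 2)).card
      = P.card := by
    refine Finset.card_nbij
      (fun p : ℕ × ℕ => ((p.1 : ZMod (ℓ^2)), (p.2 : ZMod (ℓ^2)))) ?_ ?_ ?_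
    · intro p hp
      rw [Finset.mem_coe, mem_filter, Finset.mem_product] at hp
      obtain ⟨⟨-, -⟩, hc1, hc2, hmod⟩ := hp
      rw [Finset.mem_coe, hP]
      refine ⟨(hcop p.1).mpr hc1, (hcop p.2).mpr hc2, ?_⟩
      have : ((16 * ((p.1 ^ 2 + p.1 + 1) * (p.2 ^ 2 + p.2 + 1)) : ℕ) : ZMod (ℓ^2))
          = ((9 : ℕ) : ZMod (ℓ^2)) := (ZMod.natCast_eq_natCast_iff _ _ _).mpr hmod
      push_cast at this
      exact this
    · intro p hp q hq hpq
      simp only [Finset.coe_filter, Finset.mem_coe, Set.mem_setOf_eq, mem_filter,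
        Finset.mem_product, Finset.mem_range] at hp hq
      obtain ⟨⟨hp1, hp2⟩, -⟩ := hp
      obtain ⟨⟨hq1, hq2⟩, -⟩ := hq
      have h1 := congrArg Prod.fst hpq
      have h2 := congrArg Prod.snd hpq
      simp only at h1 h2
      have e1 : p.1 = q.1 := by
        have := congrArg ZMod.val h1
        rwa [ZMod.val_cast_of_lt hp1, ZMod.val_cast_of_lt hq1] at this
      have e2 : p.2 = q.2 := by
        have := congrArg ZMod.val h2
        rwa [ZMod.val_cast_of_lt hp2, ZMod.val_cast_of_lt hq2] at this
      exact Prod.ext e1 e2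
    · intro z hz
      simp only [Finset.mem_coe] at hz
      rw [hP] at hz
      obtain ⟨hu1, hu2, heq⟩ := hz
      refine ⟨(z.1.val, z.2.val), ?_, ?_⟩
      · simp only [Finset.coe_filter, Set.mem_setOf_eq, mem_filter, Finset.mem_product,
          Finset.mem_range]
        have hv1 : ((z.1.val : ℕ) : ZMod (ℓ^2)) = z.1 := ZMod.natCast_rightInverse z.1
        have hv2 : ((z.2.val : ℕ) : ZMod (ℓ^2)) = z.2 := ZMod.natCast_rightInverse z.2
        refine ⟨⟨ZMod.val_lt z.1, ZMod.val_lt z.2⟩, ?_, ?_, ?_⟩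
        · exact (hcop _).mp (by rw [hv1]; exact hu1)
        · exact (hcop _).mp (by rw [hv2]; exact hu2)
        · have : ((16 * ((z.1.val ^ 2 + z.1.val + 1) * (z.2.val ^ 2 + z.2.val + 1)) : ℕ)
              : ZMod (ℓ^2)) = ((9 : ℕ) : ZMod (ℓ^2)) := by
            push_cast
            rw [hv1, hv2]
            exact heq
          exact (ZMod.natCast_eq_natCast_iff _ _ _).mp this
      · simp only
        exact Prod.ext (ZMod.natCast_rightInverse z.1) (ZMod.natCast_rightInverse z.2)
  rw [hcard]
  exact zmod_count h5 P hP

end Final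
end St13

theorem stmt13 :
    ∃ C : ℝ, ∀ ℓ : ℕ, ℓ.Prime → 5 ≤ ℓ →
      (2 * (ℓ : ℝ) ^ 2) * (1 - C / Real.sqrt ℓ) ≤
        (((Finset.range (ℓ ^ 2) ×ˢ Finset.range (ℓ ^ 2)).filter
          (fun p =>
            Nat.Coprime p.1 ℓ ∧ Nat.Coprime p.2 ℓ ∧
            (16 * ((p.1 ^ 2 + p.1 + 1) * (p.2 ^ 2 + p.2 + 1))) % ℓ ^ 2 = 9 % ℓ ^ 2)).card : ℝ) := by
  refine ⟨20, fun ℓ hp h5 => ?_⟩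
  haveI : Fact ℓ.Prime := ⟨hp⟩
  have h := St13.nat_count (ℓ := ℓ) h5
  set N := ((Finset.range (ℓ ^ 2) ×ˢ Finset.range (ℓ ^ 2)).filter
          (fun p =>
            Nat.Coprime p.1 ℓ ∧ Nat.Coprime p.2 ℓ ∧
            (16 * ((p.1 ^ 2 + p.1 + 1) * (p.2 ^ 2 + p.2 + 1))) % ℓ ^ 2 = 9 % ℓ ^ 2)).card with hN
  have hcardR : (2 : ℝ) * (ℓ:ℝ)^2 ≤ (N : ℝ) + 12 * ℓ := by exact_mod_cast h
  have hℓpos : (0:ℝ) < ℓ := by positivity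
  have hx : 0 < Real.sqrt ℓ := Real.sqrt_pos.mpr hℓpos
  have hxle : Real.sqrt ℓ ≤ (ℓ:ℝ) := by
    have hone : (1:ℝ) ≤ (ℓ:ℝ) := by exact_mod_cast (by omega : 1 ≤ ℓ)
    have h1 : (ℓ:ℝ) ≤ (ℓ:ℝ)^2 := by nlinarith [hone]
    calc Real.sqrt ℓ ≤ Real.sqrt ((ℓ:ℝ)^2) := Real.sqrt_le_sqrt h1
      _ = (ℓ:ℝ) := Real.sqrt_sq hℓpos.le
  have hdiv : (40 * (ℓ:ℝ)^2) / (ℓ:ℝ) ≤ (40 * (ℓ:ℝ)^2) / Real.sqrt ℓ :=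
    div_le_div_of_nonneg_left (by positivity) hx hxle
  have hdl : (40 * (ℓ:ℝ)^2) / (ℓ:ℝ) = 40 * ℓ := by field_simp
  have hkey : 12 * (ℓ:ℝ) ≤ 2 * (ℓ:ℝ)^2 * (20 / Real.sqrt ℓ) := by
    have : 2 * (ℓ:ℝ)^2 * (20 / Real.sqrt ℓ) = (40 * (ℓ:ℝ)^2) / Real.sqrt ℓ := by ring
    rw [this]
    calc 12 * (ℓ:ℝ) ≤ 40 * ℓ := by linarith
      _ = (40 * (ℓ:ℝ)^2) / (ℓ:ℝ) := hdl.symm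
      _ ≤ _ := hdiv
  have hexpand : (2 * (ℓ : ℝ) ^ 2) * (1 - 20 / Real.sqrt ℓ)
      = 2 * (ℓ:ℝ)^2 - 2 * (ℓ:ℝ)^2 * (20 / Real.sqrt ℓ) := by ring
  rw [hexpand]
  linarith
end

section
/- For every prime ℓ ≥ 5, the polynomial (X² + 3)(Y² + 3) − 9 is irreducible in F̄_ℓ[X, Y], where F̄_ℓ is an algebraic closure of the field with ℓ elements; that is, the polynomial is absolutely irreducible over F_ℓ. -/
open Polynomial in
theorem key {k : Type*} [Field k] (h2 : (2:k) ≠ 0) (h3 : (3:k) ≠ 0)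
    (α : k) (hα : α ^ 2 = -3) :
    Irreducible (C (X ^ 2 + 3) * X ^ 2 + C (3 * X ^ 2) : Polynomial (Polynomial k)) := by
  classical
  set a : k[X] := X ^ 2 + 3 with ha_def
  set c : k[X] := 3 * X ^ 2 with hc_def
  have h9 : (9 : k) ≠ 0 := by
    intro h
    apply h3
    have h' : (3:k) * 3 = 0 := by linear_combination h
    rcases mul_eq_zero.mp h' with h'' | h'' <;> exact h''
  have ha0 : a ≠ 0 := fun h => by
    have := congrArg (fun p => Polynomial.coeff p 2) h
    simp [ha_def, coeff_add, coeff_X_pow] at this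
  have hprim : (C a * X ^ 2 + C c).IsPrimitive := by
    intro r hr
    rw [C_dvd_iff_dvd_coeff] at hr
    have hr2 := hr 2
    have hr0 := hr 0
    simp [coeff_add, coeff_C_mul, coeff_X_pow, coeff_C] at hr2 hr0
    have h9d : r ∣ (9 : k[X]) := by
      have h' : (9 : k[X]) = 3 * a - c := by rw [ha_def, hc_def]; ring
      rw [h']
      exact dvd_sub (hr2.mul_left 3) hr0
    refine isUnit_of_dvd_unit h9d ?_
    rw [show (9 : k[X]) = C 9 from (map_ofNat C 9).symm]
    exact isUnit_C.mpr (Ne.isUnit h9)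
  rw [hprim.irreducible_iff_irreducible_map_fraction_map (K := RatFunc k)]
  have hmap : (C a * X ^ 2 + C c).map (algebraMap k[X] (RatFunc k)) =
      C (algebraMap k[X] (RatFunc k) a) * X ^ 2 + C (algebraMap k[X] (RatFunc k) c) := by
    simp [Polynomial.map_add, Polynomial.map_mul, Polynomial.map_pow]
  rw [hmap]
  set φ := algebraMap k[X] (RatFunc k)
  have hφa : φ a ≠ 0 := RatFunc.algebraMap_ne_zero ha0
  have hdeg : (C (φ a) * X ^ 2 + C (φ c) : (RatFunc k)[X]).natDegree = 2 := by
    rw [natDegree_add_C, natDegree_C_mul_X_pow 2 _ hφa]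
  rw [irreducible_iff_roots_eq_zero_of_degree_le_three (by omega) (by omega)]
  by_contra hroots
  obtain ⟨t, htmem⟩ := Multiset.exists_mem_of_ne_zero hroots
  have hP0 : (C (φ a) * X ^ 2 + C (φ c) : (RatFunc k)[X]) ≠ 0 := fun h => by
    rw [h, natDegree_zero] at hdeg; exact two_ne_zero hdeg.symm
  rw [mem_roots hP0] at htmem
  have ht : φ a * t ^ 2 + φ c = 0 := by
    simpa [IsRoot, eval_add, eval_mul, eval_pow] using htmem
  set p : k[X] := t.num with hp_def
  set q : k[X] := t.denom with hq_def
  have hq0 : q ≠ 0 := t.denom_ne_zero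
  have hnum : φ p = t * φ q :=
    (div_eq_iff (RatFunc.algebraMap_ne_zero hq0)).mp (RatFunc.num_div_denom t)
  have hE' : φ (a * p ^ 2 + c * q ^ 2) = 0 := by
    rw [map_add, map_mul, map_mul, map_pow, map_pow, hnum]
    linear_combination (φ q) ^ 2 * ht
  have hE : a * p ^ 2 + c * q ^ 2 = 0 := by
    have := IsFractionRing.injective k[X] (RatFunc k)
    exact this (by rw [hE', map_zero])
  have hα0 : α ≠ 0 := by
    intro h
    rw [h] at hα
    simp at hα
    exact h3 hα
  have hqα : q.eval α = 0 := by
    have h0 := congrArg (Polynomial.eval α) hE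
    simp only [ha_def, hc_def, eval_add, eval_mul, eval_pow, eval_X, eval_ofNat,
      eval_zero] at h0
    have h1 : (-9 : k) * (q.eval α) ^ 2 = 0 := by
      linear_combination h0 - (p.eval α ^ 2 + 3 * q.eval α ^ 2) * hα
    rcases mul_eq_zero.mp h1 with h' | h'
    · exact absurd (neg_eq_zero.mp h') h9
    · exact pow_eq_zero_iff two_ne_zero |>.mp h'
  obtain ⟨q₁, hq1⟩ := (dvd_iff_isRoot.mpr hqα : (X - C α) ∣ q)
  have hsq : (X - C α) * (X + C α) = a := by
    rw [ha_def]
    have hCα : (C α : k[X]) ^ 2 = -3 := by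
      rw [← map_pow, hα]
      simp only [map_neg, map_ofNat]
    linear_combination -hCα
  rw [hq1] at hE
  have hE2 : (X - C α) * ((X + C α) * p ^ 2 + c * (X - C α) * q₁ ^ 2) = 0 := by
    linear_combination hE + p ^ 2 * hsq
  have hE3 : (X + C α) * p ^ 2 + c * (X - C α) * q₁ ^ 2 = 0 :=
    (mul_eq_zero.mp hE2).resolve_left (X_sub_C_ne_zero α)
  have hpα : p.eval α = 0 := by
    have h0 := congrArg (Polynomial.eval α) hE3
    simp only [hc_def, eval_add, eval_mul, eval_pow, eval_X, eval_C, eval_sub, eval_ofNat,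
      eval_zero] at h0
    have h1 : (2 * α) * (p.eval α) ^ 2 = 0 := by linear_combination h0
    rcases mul_eq_zero.mp h1 with h' | h'
    · exact absurd h' (mul_ne_zero h2 hα0)
    · exact pow_eq_zero_iff two_ne_zero |>.mp h'
  obtain ⟨u, v, huv⟩ := t.isCoprime_num_denom
  have huv' : u * p + v * q = 1 := huv
  have hfin := congrArg (Polynomial.eval α) huv'
  simp [hpα, hqα, eval_add, eval_mul, eval_one] at hfin

open MvPolynomial in
theorem stmt14 (ℓ : ℕ) [Fact ℓ.Prime] (h5 : 5 ≤ ℓ) :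
    Irreducible ((X 0 ^ 2 + 3) * (X 1 ^ 2 + 3) - 9 :
      MvPolynomial (Fin 2) (AlgebraicClosure (ZMod ℓ))) := by
  set K := AlgebraicClosure (ZMod ℓ)
  have hchar : CharP K ℓ := inferInstance
  have hcast : ∀ n : ℕ, 0 < n → n < ℓ → (n : K) ≠ 0 := by
    intro n hn hnl h
    rw [CharP.cast_eq_zero_iff K ℓ] at h
    have := Nat.le_of_dvd hn h
    omega
  have h2 : (2 : K) ≠ 0 := by
    have := hcast 2 (by norm_num) (by omega)
    simpa using this
  have h3 : (3 : K) ≠ 0 := by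
    have := hcast 3 (by norm_num) (by omega)
    simpa using this
  obtain ⟨α, hα⟩ := IsAlgClosed.exists_pow_nat_eq (-3 : K) (n := 2) (by norm_num)
  let e : MvPolynomial (Fin 2) K ≃ₐ[K] Polynomial (Polynomial K) :=
    (MvPolynomial.finSuccEquiv K 1).trans (Polynomial.mapAlgEquiv
      ((MvPolynomial.finSuccEquiv K 0).trans (Polynomial.mapAlgEquiv
        (MvPolynomial.isEmptyAlgEquiv K (Fin 0)))))
  rw [← MulEquiv.irreducible_iff e]
  have hX0 : e (X 0) = Polynomial.X := by
    show Polynomial.mapAlgEquiv _ ((MvPolynomial.finSuccEquiv K 1) (X 0)) = _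
    rw [MvPolynomial.finSuccEquiv_X_zero, Polynomial.coe_mapAlgEquiv, Polynomial.map_X]
  have hX1 : e (X 1) = Polynomial.C Polynomial.X := by
    show Polynomial.mapAlgEquiv _ ((MvPolynomial.finSuccEquiv K 1) (X 1)) = _
    have h1 : (1 : Fin 2) = Fin.succ 0 := rfl
    rw [h1, MvPolynomial.finSuccEquiv_X_succ, Polynomial.coe_mapAlgEquiv, Polynomial.map_C]
    congr 1
    show Polynomial.mapAlgEquiv _ ((MvPolynomial.finSuccEquiv K 0) (X 0)) = _
    rw [MvPolynomial.finSuccEquiv_X_zero, Polynomial.coe_mapAlgEquiv, Polynomial.map_X]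
  have hef : e ((X 0 ^ 2 + 3) * (X 1 ^ 2 + 3) - 9) =
      Polynomial.C (Polynomial.X ^ 2 + 3) * Polynomial.X ^ 2
        + Polynomial.C (3 * Polynomial.X ^ 2) := by
    rw [map_sub, map_mul, map_add, map_add, map_pow, map_pow, hX0, hX1, map_ofNat, map_ofNat]
    rw [map_add, map_mul, map_ofNat, map_pow]
    ring
  rw [hef]
  exact key h2 h3 α hα
end
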